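/- arXiv:1203.4682 — 6 statements merged into one kernel-verified Lean document; each statement's English description precedes it below -/
import Mathlib

section
/- Let L be a Riemannian P-tensor on (V, P, g). Then for all x, y, z, w ∈ V one has L(x, Py, Pz, w) = L(x, y, z, w) and L(Px, Py, z, w) = L(x, y, z, w). -/
open scoped RealInnerProductSpace

/-- Pair symmetry for curvature-like maps, from the two antisymmetries and
the first Bianchi identity. -/
lemma curvLike_pair_symm {V : Type*} (f : V → V → V → V → ℝ)
    (hA1 : ∀ x y z w : V, f x y z w = - f y x z w)
    (hA2 : ∀ x y z w : V, f x y z w = - f x y w z)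
    (hB : ∀ x y z w : V, f x y z w + f y z x w + f z x y w = 0) :
    ∀ x y z w : V, f x y z w = f z w x y := by
  intro x y z w
  have b1 := hB x y z w
  have b2 := hB y z w x
  have b3 := hB z w x y
  have b4 := hB w x y z
  have e1 := hA2 y z w x
  have e2 := hA2 z w y x
  have e3 := hA1 w y z x
  have e4 := hA2 y w z x
  have e5 := hA2 w x y z
  have e6 := hA2 x z w y
  have e7 := hA1 x z y w
  have e8 := hA2 x y w z
  have e9 := hA1 w x y z
  have e10 := hA1 x w y z
  have e11 := hA1 y w x z
  have e12 := hA2 w y z x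
  have e13 := hA2 x w z y
  linarith

/-- Let L be a Riemannian P-tensor on (V, P, g). Then for all
x, y, z, w ∈ V one has L(x, Py, Pz, w) = L(x, y, z, w) and
L(Px, Py, z, w) = L(x, y, z, w). -/
theorem riemannian_P_tensor_prop_3_12
    {V : Type*} [NormedAddCommGroup V] [InnerProductSpace ℝ V]
    [FiniteDimensional ℝ V]
    (P : V →ₗ[ℝ] V)
    (hP2 : ∀ x : V, P (P x) = x)
    (hPg : ∀ x y : V, ⟪P x, P y⟫ = ⟪x, y⟫)
    (L : V →ₗ[ℝ] V →ₗ[ℝ] V →ₗ[ℝ] V →ₗ[ℝ] ℝ)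
    (hA1 : ∀ x y z w : V, L x y z w = - L y x z w)
    (hA2 : ∀ x y z w : V, L x y z w = - L x y w z)
    (hBianchi : ∀ x y z w : V, L x y z w + L y z x w + L z x y w = 0)
    (hRP : ∀ x y z w : V, L x y (P z) (P w) = L x y z w) :
    ∀ x y z w : V,
      L x (P y) (P z) w = L x y z w ∧ L (P x) (P y) z w = L x y z w := by
  -- pair symmetry for L
  have pair : ∀ x y z w : V, L x y z w = L z w x y :=
    curvLike_pair_symm (fun x y z w => L x y z w) hA1 hA2 hBianchi
  -- key: move a single P between the last two slots
  have K : ∀ a b c d : V, L a b c (P d) = L a b (P c) d := by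
    intro a b c d
    have h := hRP a b (P c) d
    rw [hP2] at h
    exact h
  -- Q a b c d := L a b c (P d) is also curvature-like
  have pairQ : ∀ x y z w : V, L x y z (P w) = L z w x (P y) := by
    refine curvLike_pair_symm (fun a b c d => L a b c (P d)) ?_ ?_ ?_
    · intro a b c d; exact hA1 a b c (P d)
    · intro a b c d
      show L a b c (P d) = -L a b d (P c)
      rw [K a b c d, hA2 a b (P c) d, K a b d c]
    · intro a b c d; exact hBianchi a b c (P d)
  intro x y z w
  constructor
  · have h1 : L x (P y) (P z) w = L x (P y) z (P w) := (K x (P y) z w).symm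
    have h2 := pairQ x (P y) z w
    rw [hP2] at h2
    rw [h1, h2, ← pair x y z w]
  · have h1 := pair (P x) (P y) z w
    have h2 := hRP z w x y
    have h3 := pair z w x y
    rw [h1, h2, ← h3]
end

section
/- Let L be a Riemannian P-tensor on (V, P, g). Then for all x, y, z, w ∈ V one has L(Px, y, z, w) = L(x, Py, z, w) = L(x, y, Pz, w) = L(x, y, z, Pw). -/
open scoped RealInnerProductSpace

/-- Pair symmetry for curvature-like functions. -/
lemma pair_symm_aux {V : Type*} (f : V → V → V → V → ℝ)
    (h1 : ∀ x y z w, f x y z w = - f y x z w)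
    (h2 : ∀ x y z w, f x y z w = - f x y w z)
    (hB : ∀ x y z w, f x y z w + f y z x w + f z x y w = 0) :
    ∀ x y z w, f x y z w = f z w x y := by
  intro x y z w
  have e1 := hB x y z w
  have e2 := hB y z w x
  have e3 := hB z w x y
  have e4 := hB w x y z
  have a1 := h2 y z w x
  have a2 := h2 z w y x
  have a3 := h2 w y z x
  have a4 := h1 w y x z
  have a5 := h2 w x z y
  have a6 := h2 x z w y
  have a7 := h1 x z y w
  have a8 := h2 x y w z
  have a9 := h1 y w x z
  linarith

/-- Let L be a Riemannian P-tensor on (V, P, g). Then for all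
x, y, z, w ∈ V one has L(Px, y, z, w) = L(x, Py, z, w) = L(x, y, Pz, w)
= L(x, y, z, Pw). -/
theorem riemannian_P_tensor_prop_3_13
    {V : Type*} [NormedAddCommGroup V] [InnerProductSpace ℝ V]
    [FiniteDimensional ℝ V]
    (P : V →ₗ[ℝ] V)
    (hP2 : ∀ x : V, P (P x) = x)
    (hPg : ∀ x y : V, ⟪P x, P y⟫ = ⟪x, y⟫)
    (L : V →ₗ[ℝ] V →ₗ[ℝ] V →ₗ[ℝ] V →ₗ[ℝ] ℝ)
    (hA1 : ∀ x y z w : V, L x y z w = - L y x z w)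
    (hA2 : ∀ x y z w : V, L x y z w = - L x y w z)
    (hBianchi : ∀ x y z w : V, L x y z w + L y z x w + L z x y w = 0)
    (hRP : ∀ x y z w : V, L x y (P z) (P w) = L x y z w) :
    ∀ x y z w : V,
      L (P x) y z w = L x (P y) z w ∧
      L x (P y) z w = L x y (P z) w ∧
      L x y (P z) w = L x y z (P w) := by
  -- pair symmetry of L
  have hpair : ∀ x y z w : V, L x y z w = L z w x y :=
    pair_symm_aux (fun x y z w => L x y z w) hA1 hA2 hBianchi
  -- third equality
  have e3 : ∀ x y z w : V, L x y (P z) w = L x y z (P w) := by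
    intro x y z w
    conv_lhs => rw [show w = P (P w) from (hP2 w).symm]
    exact hRP x y z (P w)
  -- the modified tensor F x y z w = L x y (P z) w is also curvature-like
  have hF : ∀ x y z w : V, L x y (P z) w = L z w (P x) y := by
    apply pair_symm_aux (fun x y z w => L x y (P z) w)
    · intro x y z w; exact hA1 x y (P z) w
    · intro x y z w
      rw [e3 x y w z]
      exact hA2 x y (P z) w
    · intro x y z w
      rw [e3 x y z w, e3 y z x w, e3 z x y w]
      exact hBianchi x y z (P w)
  intro x y z w
  refine ⟨?_, ?_, e3 x y z w⟩
  · -- L (P x) y z w = L x (P y) z w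
    calc L (P x) y z w = L z w (P x) y := hpair _ _ _ _
      _ = L z w x (P y) := e3 z w x y
      _ = L x (P y) z w := (hpair _ _ _ _).symm
  · -- L x (P y) z w = L x y (P z) w
    calc L x (P y) z w = L z w x (P y) := hpair _ _ _ _
      _ = L z w (P x) y := (e3 z w x y).symm
      _ = L x y (P z) w := hF z w x y
end

section
/- On (V, P, g), the tensor π₃ = ψ₁(g̃), where g̃(x,y) = g(x,Py), is a Riemannian P-tensor. -/
open scoped RealInnerProductSpace

open scoped RealInnerProductSpace

variable {V : Type*} [NormedAddCommGroup V] [InnerProductSpace ℝ V]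
  [FiniteDimensional ℝ V]

/-- The tensor ψ₁(S) built from a (0,2)-tensor S and the metric g. -/
noncomputable def psi1 (S : V → V → ℝ) (x y z w : V) : ℝ :=
  ⟪y, z⟫ * S x w - ⟪x, z⟫ * S y w + S y z * ⟪x, w⟫ - S x z * ⟪y, w⟫

/-- The tensor ψ₂(S)(x,y,z,w) = ψ₁(S)(x,y,Pz,Pw). -/
noncomputable def psi2 (P : V →ₗ[ℝ] V) (S : V → V → ℝ) (x y z w : V) : ℝ :=
  psi1 S x y (P z) (P w)

/-- A (0,4)-tensor is curvature-like if it is antisymmetric in the first and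
last pairs of arguments and satisfies the first Bianchi identity. -/
def IsCurvatureLike (L : V → V → V → V → ℝ) : Prop :=
  (∀ x y z w : V, L x y z w = - L y x z w) ∧
  (∀ x y z w : V, L x y z w = - L x y w z) ∧
  (∀ x y z w : V, L x y z w + L y z x w + L z x y w = 0)

/-- π₁ = (1/2)ψ₁(g). -/
noncomputable def pi1 (x y z w : V) : ℝ :=
  (1 / 2 : ℝ) * psi1 (fun a b : V => ⟪a, b⟫) x y z w

/-- π₂ = (1/2)ψ₂(g). -/
noncomputable def pi2 (P : V →ₗ[ℝ] V) (x y z w : V) : ℝ :=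
  (1 / 2 : ℝ) * psi2 P (fun a b : V => ⟪a, b⟫) x y z w

/-- π₃ = ψ₁(g̃), where g̃(x,y) = g(x,Py). -/
noncomputable def pi3 (P : V →ₗ[ℝ] V) (x y z w : V) : ℝ :=
  psi1 (fun a b : V => ⟪a, P b⟫) x y z w


/-- A Riemannian P-tensor is a curvature-like tensor L satisfying in addition
L(x,y,Pz,Pw) = L(x,y,z,w). -/
def IsRiemannianPTensor (P : V →ₗ[ℝ] V) (L : V → V → V → V → ℝ) : Prop :=
  IsCurvatureLike L ∧ ∀ x y z w : V, L x y (P z) (P w) = L x y z w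

/-- On (V, P, g), the tensor π₃ = ψ₁(g̃), where g̃(x,y) = g(x,Py),
is a Riemannian P-tensor. -/
theorem pi3_riemannianPTensor
    (P : V →ₗ[ℝ] V)
    (hP2 : ∀ x : V, P (P x) = x)
    (hPg : ∀ x y : V, ⟪P x, P y⟫ = ⟪x, y⟫) :
    IsRiemannianPTensor P (pi3 P) := by
  have hsymm : ∀ a b : V, ⟪a, P b⟫ = ⟪b, P a⟫ := by
    intro a b
    rw [← hPg a (P b), hP2, real_inner_comm]
  refine ⟨⟨?_, ?_, ?_⟩, ?_⟩
  · intro x y z w; simp only [pi3, psi1]; ring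
  · intro x y z w; simp only [pi3, psi1]
    ring
  · intro x y z w; simp only [pi3, psi1]
    rw [real_inner_comm y x, real_inner_comm z x, real_inner_comm z y,
      hsymm y x, hsymm z x, hsymm z y]
    ring
  · intro x y z w; simp only [pi3, psi1]
    rw [hsymm x (P w), hsymm y (P w), hPg w x, hPg w y, hP2,
      real_inner_comm w x, real_inner_comm w y]
    ring
end

section
/- Let (V, P, g) be 4-dimensional, let {E₁, E₂, PE₁, PE₂} be an orthonormal basis of V, and let L be a Riemannian P-tensor on V. Set ν = L(E₁, E₂, E₁, E₂) and ν* = L(E₁, E₂, E₁, PE₂). Then the Ricci tensor of L satisfies ρ(L)(y, z) = −2ν g(y, z) − 2ν* g(y, Pz) for all y, z ∈ V, and the scalar curvatures satisfy τ(L) = −8ν and τ*(L) = −8ν*. -/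
open scoped RealInnerProductSpace
open Module

private theorem bilin_eq_of_basis {ι : Type*} {V : Type*} [AddCommGroup V] [Module ℝ V]
    (b : Basis ι ℝ V) (f g : V → V → ℝ)
    (hfa1 : ∀ x y z : V, f (x + y) z = f x z + f y z)
    (hfs1 : ∀ (c : ℝ) (x z : V), f (c • x) z = c • f x z)
    (hfa2 : ∀ x y z : V, f x (y + z) = f x y + f x z)
    (hfs2 : ∀ (c : ℝ) (x z : V), f x (c • z) = c • f x z)
    (hga1 : ∀ x y z : V, g (x + y) z = g x z + g y z)
    (hgs1 : ∀ (c : ℝ) (x z : V), g (c • x) z = c • g x z)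
    (hga2 : ∀ x y z : V, g x (y + z) = g x y + g x z)
    (hgs2 : ∀ (c : ℝ) (x z : V), g x (c • z) = c • g x z)
    (h : ∀ i j, f (b i) (b j) = g (b i) (b j)) : ∀ y z, f y z = g y z := by
  have hFG : LinearMap.mk₂ ℝ f hfa1 hfs1 hfa2 hfs2 = LinearMap.mk₂ ℝ g hga1 hgs1 hga2 hgs2 :=
    b.ext fun i => b.ext fun j => h i j
  intro y z
  have := congrFun (congrArg (fun (F : V →ₗ[ℝ] V →ₗ[ℝ] ℝ) (u : V) => F u z) hFG) y
  simpa using this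

set_option maxHeartbeats 3200000 in
/-- Let (V, P, g) be 4-dimensional, let {E₁, E₂, PE₁, PE₂} be an
orthonormal basis of V, and let L be a Riemannian P-tensor on V. Set
ν = L(E₁, E₂, E₁, E₂) and ν* = L(E₁, E₂, E₁, PE₂). Then the Ricci tensor of L
satisfies ρ(L)(y,z) = −2ν g(y,z) − 2ν* g(y,Pz) for all y, z ∈ V, and the
scalar curvatures satisfy τ(L) = −8ν and τ*(L) = −8ν*. -/
theorem riemannian_P_tensor_ricci_dim4
    {V : Type*} [NormedAddCommGroup V] [InnerProductSpace ℝ V]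
    [FiniteDimensional ℝ V] (hdim : finrank ℝ V = 4)
    (P : V →ₗ[ℝ] V)
    (hP2 : ∀ x : V, P (P x) = x)
    (hPg : ∀ x y : V, ⟪P x, P y⟫ = ⟪x, y⟫)
    (E₁ E₂ : V)
    (e : Fin 4 → V) (he : e = ![E₁, E₂, P E₁, P E₂])
    (hON : Orthonormal ℝ e)
    (hspan : Submodule.span ℝ (Set.range e) = ⊤)
    (L : V →ₗ[ℝ] V →ₗ[ℝ] V →ₗ[ℝ] V →ₗ[ℝ] ℝ)
    (hA1 : ∀ x y z w : V, L x y z w = - L y x z w)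
    (hA2 : ∀ x y z w : V, L x y z w = - L x y w z)
    (hBianchi : ∀ x y z w : V, L x y z w + L y z x w + L z x y w = 0)
    (hRP : ∀ x y z w : V, L x y (P z) (P w) = L x y z w)
    (ν νs : ℝ)
    (hν : ν = L E₁ E₂ E₁ E₂)
    (hνs : νs = L E₁ E₂ E₁ (P E₂)) :
    (∀ y z : V, (∑ i : Fin 4, L (e i) y z (e i)) = -2 * ν * ⟪y, z⟫ - 2 * νs * ⟪y, P z⟫) ∧
    (∑ j : Fin 4, ∑ i : Fin 4, L (e i) (e j) (e j) (e i)) = -8 * ν ∧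
    (∑ j : Fin 4, ∑ i : Fin 4, L (e i) (e j) (e j) (P (e i))) = -8 * νs := by
  have hE0 : e 0 = E₁ := by rw [he]; rfl
  have hE1 : e 1 = E₂ := by rw [he]; rfl
  have hE2 : e 2 = P E₁ := by rw [he]; rfl
  have hE3 : e 3 = P E₂ := by rw [he]; rfl
  have hp0 : P (e 0) = e 2 := by rw [hE0, hE2]
  have hp1 : P (e 1) = e 3 := by rw [hE1, hE3]
  have hp2 : P (e 2) = e 0 := by rw [hE2, hE0, hP2]
  have hp3 : P (e 3) = e 1 := by rw [hE3, hE1, hP2]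
  have hν' : ν = L (e 0) (e 1) (e 0) (e 1) := by rw [hE0, hE1]; exact hν
  have hνs' : νs = L (e 0) (e 1) (e 0) (e 3) := by rw [hE0, hE1, hE3]; exact hνs
  have hg : ∀ i j : Fin 4, ⟪e i, e j⟫ = if i = j then 1 else 0 := fun i j =>
    orthonormal_iff_ite.mp hON i j
  have hrp0000 : L (e 0) (e 0) (e 2) (e 2) = L (e 0) (e 0) (e 0) (e 0) := by
    have t := hRP (e 0) (e 0) (e 0) (e 0); simp only [hp0, hp1, hp2, hp3] at t; exact t
  have hrp0011 : L (e 0) (e 0) (e 3) (e 3) = L (e 0) (e 0) (e 1) (e 1) := by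
    have t := hRP (e 0) (e 0) (e 1) (e 1); simp only [hp0, hp1, hp2, hp3] at t; exact t
  have hrp0100 : L (e 0) (e 1) (e 2) (e 2) = L (e 0) (e 1) (e 0) (e 0) := by
    have t := hRP (e 0) (e 1) (e 0) (e 0); simp only [hp0, hp1, hp2, hp3] at t; exact t
  have hrp0101 : L (e 0) (e 1) (e 2) (e 3) = L (e 0) (e 1) (e 0) (e 1) := by
    have t := hRP (e 0) (e 1) (e 0) (e 1); simp only [hp0, hp1, hp2, hp3] at t; exact t
  have hrp0102 : L (e 0) (e 1) (e 2) (e 0) = L (e 0) (e 1) (e 0) (e 2) := by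
    have t := hRP (e 0) (e 1) (e 0) (e 2); simp only [hp0, hp1, hp2, hp3] at t; exact t
  have hrp0103 : L (e 0) (e 1) (e 2) (e 1) = L (e 0) (e 1) (e 0) (e 3) := by
    have t := hRP (e 0) (e 1) (e 0) (e 3); simp only [hp0, hp1, hp2, hp3] at t; exact t
  have hrp0110 : L (e 0) (e 1) (e 3) (e 2) = L (e 0) (e 1) (e 1) (e 0) := by
    have t := hRP (e 0) (e 1) (e 1) (e 0); simp only [hp0, hp1, hp2, hp3] at t; exact t
  have hrp0111 : L (e 0) (e 1) (e 3) (e 3) = L (e 0) (e 1) (e 1) (e 1) := by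
    have t := hRP (e 0) (e 1) (e 1) (e 1); simp only [hp0, hp1, hp2, hp3] at t; exact t
  have hrp0113 : L (e 0) (e 1) (e 3) (e 1) = L (e 0) (e 1) (e 1) (e 3) := by
    have t := hRP (e 0) (e 1) (e 1) (e 3); simp only [hp0, hp1, hp2, hp3] at t; exact t
  have hrp0200 : L (e 0) (e 2) (e 2) (e 2) = L (e 0) (e 2) (e 0) (e 0) := by
    have t := hRP (e 0) (e 2) (e 0) (e 0); simp only [hp0, hp1, hp2, hp3] at t; exact t
  have hrp0202 : L (e 0) (e 2) (e 2) (e 0) = L (e 0) (e 2) (e 0) (e 2) := by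
    have t := hRP (e 0) (e 2) (e 0) (e 2); simp only [hp0, hp1, hp2, hp3] at t; exact t
  have hrp0203 : L (e 0) (e 2) (e 2) (e 1) = L (e 0) (e 2) (e 0) (e 3) := by
    have t := hRP (e 0) (e 2) (e 0) (e 3); simp only [hp0, hp1, hp2, hp3] at t; exact t
  have hrp0210 : L (e 0) (e 2) (e 3) (e 2) = L (e 0) (e 2) (e 1) (e 0) := by
    have t := hRP (e 0) (e 2) (e 1) (e 0); simp only [hp0, hp1, hp2, hp3] at t; exact t
  have hrp0211 : L (e 0) (e 2) (e 3) (e 3) = L (e 0) (e 2) (e 1) (e 1) := by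
    have t := hRP (e 0) (e 2) (e 1) (e 1); simp only [hp0, hp1, hp2, hp3] at t; exact t
  have hrp0213 : L (e 0) (e 2) (e 3) (e 1) = L (e 0) (e 2) (e 1) (e 3) := by
    have t := hRP (e 0) (e 2) (e 1) (e 3); simp only [hp0, hp1, hp2, hp3] at t; exact t
  have hrp0300 : L (e 0) (e 3) (e 2) (e 2) = L (e 0) (e 3) (e 0) (e 0) := by
    have t := hRP (e 0) (e 3) (e 0) (e 0); simp only [hp0, hp1, hp2, hp3] at t; exact t
  have hrp0301 : L (e 0) (e 3) (e 2) (e 3) = L (e 0) (e 3) (e 0) (e 1) := by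
    have t := hRP (e 0) (e 3) (e 0) (e 1); simp only [hp0, hp1, hp2, hp3] at t; exact t
  have hrp0302 : L (e 0) (e 3) (e 2) (e 0) = L (e 0) (e 3) (e 0) (e 2) := by
    have t := hRP (e 0) (e 3) (e 0) (e 2); simp only [hp0, hp1, hp2, hp3] at t; exact t
  have hrp0303 : L (e 0) (e 3) (e 2) (e 1) = L (e 0) (e 3) (e 0) (e 3) := by
    have t := hRP (e 0) (e 3) (e 0) (e 3); simp only [hp0, hp1, hp2, hp3] at t; exact t
  have hrp0310 : L (e 0) (e 3) (e 3) (e 2) = L (e 0) (e 3) (e 1) (e 0) := by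
    have t := hRP (e 0) (e 3) (e 1) (e 0); simp only [hp0, hp1, hp2, hp3] at t; exact t
  have hrp0311 : L (e 0) (e 3) (e 3) (e 3) = L (e 0) (e 3) (e 1) (e 1) := by
    have t := hRP (e 0) (e 3) (e 1) (e 1); simp only [hp0, hp1, hp2, hp3] at t; exact t
  have hrp0313 : L (e 0) (e 3) (e 3) (e 1) = L (e 0) (e 3) (e 1) (e 3) := by
    have t := hRP (e 0) (e 3) (e 1) (e 3); simp only [hp0, hp1, hp2, hp3] at t; exact t
  have hrp1100 : L (e 1) (e 1) (e 2) (e 2) = L (e 1) (e 1) (e 0) (e 0) := by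
    have t := hRP (e 1) (e 1) (e 0) (e 0); simp only [hp0, hp1, hp2, hp3] at t; exact t
  have hrp1103 : L (e 1) (e 1) (e 2) (e 1) = L (e 1) (e 1) (e 0) (e 3) := by
    have t := hRP (e 1) (e 1) (e 0) (e 3); simp only [hp0, hp1, hp2, hp3] at t; exact t
  have hrp1111 : L (e 1) (e 1) (e 3) (e 3) = L (e 1) (e 1) (e 1) (e 1) := by
    have t := hRP (e 1) (e 1) (e 1) (e 1); simp only [hp0, hp1, hp2, hp3] at t; exact t
  have hrp1200 : L (e 1) (e 2) (e 2) (e 2) = L (e 1) (e 2) (e 0) (e 0) := by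
    have t := hRP (e 1) (e 2) (e 0) (e 0); simp only [hp0, hp1, hp2, hp3] at t; exact t
  have hrp1201 : L (e 1) (e 2) (e 2) (e 3) = L (e 1) (e 2) (e 0) (e 1) := by
    have t := hRP (e 1) (e 2) (e 0) (e 1); simp only [hp0, hp1, hp2, hp3] at t; exact t
  have hrp1202 : L (e 1) (e 2) (e 2) (e 0) = L (e 1) (e 2) (e 0) (e 2) := by
    have t := hRP (e 1) (e 2) (e 0) (e 2); simp only [hp0, hp1, hp2, hp3] at t; exact t
  have hrp1203 : L (e 1) (e 2) (e 2) (e 1) = L (e 1) (e 2) (e 0) (e 3) := by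
    have t := hRP (e 1) (e 2) (e 0) (e 3); simp only [hp0, hp1, hp2, hp3] at t; exact t
  have hrp1210 : L (e 1) (e 2) (e 3) (e 2) = L (e 1) (e 2) (e 1) (e 0) := by
    have t := hRP (e 1) (e 2) (e 1) (e 0); simp only [hp0, hp1, hp2, hp3] at t; exact t
  have hrp1211 : L (e 1) (e 2) (e 3) (e 3) = L (e 1) (e 2) (e 1) (e 1) := by
    have t := hRP (e 1) (e 2) (e 1) (e 1); simp only [hp0, hp1, hp2, hp3] at t; exact t
  have hrp1213 : L (e 1) (e 2) (e 3) (e 1) = L (e 1) (e 2) (e 1) (e 3) := by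
    have t := hRP (e 1) (e 2) (e 1) (e 3); simp only [hp0, hp1, hp2, hp3] at t; exact t
  have hrp1300 : L (e 1) (e 3) (e 2) (e 2) = L (e 1) (e 3) (e 0) (e 0) := by
    have t := hRP (e 1) (e 3) (e 0) (e 0); simp only [hp0, hp1, hp2, hp3] at t; exact t
  have hrp1301 : L (e 1) (e 3) (e 2) (e 3) = L (e 1) (e 3) (e 0) (e 1) := by
    have t := hRP (e 1) (e 3) (e 0) (e 1); simp only [hp0, hp1, hp2, hp3] at t; exact t
  have hrp1302 : L (e 1) (e 3) (e 2) (e 0) = L (e 1) (e 3) (e 0) (e 2) := by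
    have t := hRP (e 1) (e 3) (e 0) (e 2); simp only [hp0, hp1, hp2, hp3] at t; exact t
  have hrp1303 : L (e 1) (e 3) (e 2) (e 1) = L (e 1) (e 3) (e 0) (e 3) := by
    have t := hRP (e 1) (e 3) (e 0) (e 3); simp only [hp0, hp1, hp2, hp3] at t; exact t
  have hrp1311 : L (e 1) (e 3) (e 3) (e 3) = L (e 1) (e 3) (e 1) (e 1) := by
    have t := hRP (e 1) (e 3) (e 1) (e 1); simp only [hp0, hp1, hp2, hp3] at t; exact t
  have hrp1313 : L (e 1) (e 3) (e 3) (e 1) = L (e 1) (e 3) (e 1) (e 3) := by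
    have t := hRP (e 1) (e 3) (e 1) (e 3); simp only [hp0, hp1, hp2, hp3] at t; exact t
  have hrp2200 : L (e 2) (e 2) (e 2) (e 2) = L (e 2) (e 2) (e 0) (e 0) := by
    have t := hRP (e 2) (e 2) (e 0) (e 0); simp only [hp0, hp1, hp2, hp3] at t; exact t
  have hrp2210 : L (e 2) (e 2) (e 3) (e 2) = L (e 2) (e 2) (e 1) (e 0) := by
    have t := hRP (e 2) (e 2) (e 1) (e 0); simp only [hp0, hp1, hp2, hp3] at t; exact t
  have hrp2211 : L (e 2) (e 2) (e 3) (e 3) = L (e 2) (e 2) (e 1) (e 1) := by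
    have t := hRP (e 2) (e 2) (e 1) (e 1); simp only [hp0, hp1, hp2, hp3] at t; exact t
  have hrp2300 : L (e 2) (e 3) (e 2) (e 2) = L (e 2) (e 3) (e 0) (e 0) := by
    have t := hRP (e 2) (e 3) (e 0) (e 0); simp only [hp0, hp1, hp2, hp3] at t; exact t
  have hrp2301 : L (e 2) (e 3) (e 2) (e 3) = L (e 2) (e 3) (e 0) (e 1) := by
    have t := hRP (e 2) (e 3) (e 0) (e 1); simp only [hp0, hp1, hp2, hp3] at t; exact t
  have hrp2303 : L (e 2) (e 3) (e 2) (e 1) = L (e 2) (e 3) (e 0) (e 3) := by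
    have t := hRP (e 2) (e 3) (e 0) (e 3); simp only [hp0, hp1, hp2, hp3] at t; exact t
  have hrp2310 : L (e 2) (e 3) (e 3) (e 2) = L (e 2) (e 3) (e 1) (e 0) := by
    have t := hRP (e 2) (e 3) (e 1) (e 0); simp only [hp0, hp1, hp2, hp3] at t; exact t
  have hrp2311 : L (e 2) (e 3) (e 3) (e 3) = L (e 2) (e 3) (e 1) (e 1) := by
    have t := hRP (e 2) (e 3) (e 1) (e 1); simp only [hp0, hp1, hp2, hp3] at t; exact t
  have hrp3311 : L (e 3) (e 3) (e 3) (e 3) = L (e 3) (e 3) (e 1) (e 1) := by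
    have t := hRP (e 3) (e 3) (e 1) (e 1); simp only [hp0, hp1, hp2, hp3] at t; exact t
  have key00 : L (e 0) (e 0) (e 0) (e 0) + L (e 1) (e 0) (e 0) (e 1) + L (e 2) (e 0) (e 0) (e 2) + L (e 3) (e 0) (e 0) (e 3) = -2*ν := by
    linear_combination -hrp0000 - (hA1 (e 0) (e 0) (e 1) (e 1)) + (hBianchi (e 0) (e 0) (e 1) (e 1)) - hrp0011 + (hBianchi (e 0) (e 0) (e 2) (e 2)) + (hBianchi (e 0) (e 0) (e 3) (e 3)) + (hA2 (e 0) (e 1) (e 0) (e 1)) + hrp0110 - (hBianchi (e 0) (e 1) (e 3) (e 2)) + ((-1 : ℝ)/2) * (hA2 (e 0) (e 2) (e 0) (e 2)) + ((1 : ℝ)/2) * hrp0202 + hrp0303 + (hA1 (e 0) (e 3) (e 1) (e 2)) - (hA2 (e 0) (e 3) (e 1) (e 2)) + ((1 : ℝ)/2) * (hA2 (e 1) (e 3) (e 0) (e 2)) + ((-1 : ℝ)/2) * hrp1302 + (2 : ℝ) * hν'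
  have key01 : L (e 0) (e 0) (e 1) (e 0) + L (e 1) (e 0) (e 1) (e 1) + L (e 2) (e 0) (e 1) (e 2) + L (e 3) (e 0) (e 1) (e 3) = 0 := by
    linear_combination ((-1 : ℝ)/2) * (hA1 (e 0) (e 0) (e 0) (e 1)) + (hA2 (e 0) (e 0) (e 0) (e 1)) + ((-1 : ℝ)/2) * (hA2 (e 0) (e 1) (e 0) (e 0)) - hrp0100 + (hA1 (e 0) (e 1) (e 1) (e 1)) + ((-1 : ℝ)/2) * (hA2 (e 0) (e 1) (e 1) (e 1)) + (hBianchi (e 0) (e 1) (e 2) (e 2)) + (hA1 (e 0) (e 3) (e 1) (e 3)) + ((-1 : ℝ)/2) * (hA2 (e 0) (e 3) (e 1) (e 3)) + ((1 : ℝ)/2) * hrp0313 + ((-1 : ℝ)/2) * (hA2 (e 1) (e 2) (e 0) (e 2)) + ((1 : ℝ)/2) * hrp1202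
  have key02 : L (e 0) (e 0) (e 2) (e 0) + L (e 1) (e 0) (e 2) (e 1) + L (e 2) (e 0) (e 2) (e 2) + L (e 3) (e 0) (e 2) (e 3) = -2*νs := by
    linear_combination ((-1 : ℝ)/2) * (hA1 (e 0) (e 0) (e 0) (e 2)) + (hA2 (e 0) (e 0) (e 0) (e 2)) + (hA2 (e 0) (e 1) (e 0) (e 3)) - hrp0103 + (hA1 (e 0) (e 1) (e 2) (e 1)) - (hBianchi (e 0) (e 1) (e 3) (e 0)) + ((-1 : ℝ)/2) * (hA2 (e 0) (e 2) (e 0) (e 0)) - hrp0200 + (hA1 (e 0) (e 2) (e 2) (e 2)) - (hA2 (e 0) (e 3) (e 0) (e 1)) - hrp0301 + (hA1 (e 0) (e 3) (e 1) (e 0)) + (hA1 (e 0) (e 3) (e 2) (e 3)) + ((1 : ℝ)/2) * (hA2 (e 1) (e 3) (e 0) (e 0)) + (2 : ℝ) * hνs'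
  have key03 : L (e 0) (e 0) (e 3) (e 0) + L (e 1) (e 0) (e 3) (e 1) + L (e 2) (e 0) (e 3) (e 2) + L (e 3) (e 0) (e 3) (e 3) = 0 := by
    linear_combination ((-1 : ℝ)/2) * (hA1 (e 0) (e 0) (e 0) (e 3)) + (hA2 (e 0) (e 0) (e 0) (e 3)) + ((-1 : ℝ)/2) * (hA2 (e 0) (e 1) (e 0) (e 2)) + ((-1 : ℝ)/2) * hrp0102 + ((-1 : ℝ)/2) * (hA2 (e 0) (e 1) (e 1) (e 3)) + ((-1 : ℝ)/2) * hrp0113 + (hBianchi (e 0) (e 1) (e 2) (e 0)) + (hA1 (e 0) (e 1) (e 3) (e 1)) - (hA1 (e 0) (e 2) (e 1) (e 0)) - hrp0210 + (hA1 (e 0) (e 2) (e 3) (e 2)) + ((-1 : ℝ)/2) * (hA2 (e 0) (e 3) (e 1) (e 1)) - hrp0311 + (hA1 (e 0) (e 3) (e 3) (e 3)) + ((-1 : ℝ)/2) * (hA2 (e 1) (e 2) (e 0) (e 0))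
  have key10 : L (e 0) (e 1) (e 0) (e 0) + L (e 1) (e 1) (e 0) (e 1) + L (e 2) (e 1) (e 0) (e 2) + L (e 3) (e 1) (e 0) (e 3) = 0 := by
    linear_combination ((1 : ℝ)/2) * (hA2 (e 0) (e 1) (e 0) (e 0)) - (hA1 (e 0) (e 1) (e 1) (e 1)) + ((1 : ℝ)/2) * (hA2 (e 0) (e 1) (e 1) (e 1)) + (hBianchi (e 0) (e 1) (e 1) (e 1)) + hrp0111 - (hA1 (e 0) (e 1) (e 2) (e 2)) + (hBianchi (e 0) (e 1) (e 2) (e 2)) - (hA1 (e 0) (e 1) (e 3) (e 3)) - (hA1 (e 0) (e 2) (e 1) (e 2)) + (hBianchi (e 0) (e 2) (e 1) (e 2)) + ((-1 : ℝ)/2) * (hA2 (e 0) (e 3) (e 1) (e 3)) + (hBianchi (e 0) (e 3) (e 1) (e 3)) + ((1 : ℝ)/2) * hrp0313 + ((-1 : ℝ)/2) * (hA2 (e 1) (e 2) (e 0) (e 2)) + ((1 : ℝ)/2) * hrp1202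
  have key11 : L (e 0) (e 1) (e 1) (e 0) + L (e 1) (e 1) (e 1) (e 1) + L (e 2) (e 1) (e 1) (e 2) + L (e 3) (e 1) (e 1) (e 3) = -2*ν := by
    linear_combination (hA2 (e 0) (e 1) (e 0) (e 1)) - hrp0101 + (hA1 (e 0) (e 1) (e 1) (e 0)) - (hBianchi (e 0) (e 1) (e 1) (e 0)) + (hBianchi (e 0) (e 1) (e 2) (e 3)) - (hA1 (e 0) (e 2) (e 1) (e 3)) + ((1 : ℝ)/2) * (hA2 (e 0) (e 2) (e 1) (e 3)) + ((-1 : ℝ)/2) * hrp0213 - hrp1100 - hrp1111 + (hBianchi (e 1) (e 1) (e 2) (e 2)) + (hBianchi (e 1) (e 1) (e 3) (e 3)) + hrp1203 - (hA2 (e 1) (e 2) (e 1) (e 2)) + ((-1 : ℝ)/2) * (hA2 (e 1) (e 3) (e 1) (e 3)) + ((1 : ℝ)/2) * hrp1313 + (2 : ℝ) * hν'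
  have key12 : L (e 0) (e 1) (e 2) (e 0) + L (e 1) (e 1) (e 2) (e 1) + L (e 2) (e 1) (e 2) (e 2) + L (e 3) (e 1) (e 2) (e 3) = 0 := by
    linear_combination ((1 : ℝ)/2) * (hA2 (e 0) (e 1) (e 0) (e 2)) + ((1 : ℝ)/2) * hrp0102 - (hA1 (e 0) (e 1) (e 1) (e 3)) + ((1 : ℝ)/2) * (hA2 (e 0) (e 1) (e 1) (e 3)) + (hBianchi (e 0) (e 1) (e 1) (e 3)) + ((1 : ℝ)/2) * hrp0113 - (hBianchi (e 0) (e 1) (e 3) (e 1)) + (hA1 (e 0) (e 3) (e 1) (e 1)) + ((-1 : ℝ)/2) * (hA2 (e 0) (e 3) (e 1) (e 1)) + hrp1103 + ((-1 : ℝ)/2) * (hA2 (e 1) (e 2) (e 0) (e 0)) - hrp1200 + (hA1 (e 1) (e 2) (e 2) (e 2)) - hrp1301 + (hA1 (e 1) (e 3) (e 2) (e 3))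
  have key13 : L (e 0) (e 1) (e 3) (e 0) + L (e 1) (e 1) (e 3) (e 1) + L (e 2) (e 1) (e 3) (e 2) + L (e 3) (e 1) (e 3) (e 3) = -2*νs := by
    linear_combination (hA2 (e 0) (e 1) (e 0) (e 3)) - hrp0103 + (hBianchi (e 0) (e 1) (e 2) (e 1)) - (hA1 (e 0) (e 2) (e 1) (e 1)) + ((1 : ℝ)/2) * (hA2 (e 0) (e 2) (e 1) (e 1)) + ((-1 : ℝ)/2) * (hA1 (e 1) (e 1) (e 1) (e 3)) + (hA2 (e 1) (e 1) (e 1) (e 3)) - (hA2 (e 1) (e 2) (e 0) (e 1)) - hrp1210 + (hA1 (e 1) (e 2) (e 3) (e 2)) + ((-1 : ℝ)/2) * (hA2 (e 1) (e 3) (e 1) (e 1)) - hrp1311 + (hA1 (e 1) (e 3) (e 3) (e 3)) + (2 : ℝ) * hνs'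
  have key20 : L (e 0) (e 2) (e 0) (e 0) + L (e 1) (e 2) (e 0) (e 1) + L (e 2) (e 2) (e 0) (e 2) + L (e 3) (e 2) (e 0) (e 3) = -2*νs := by
    linear_combination (hA2 (e 0) (e 1) (e 0) (e 3)) - hrp0103 + (hBianchi (e 0) (e 1) (e 2) (e 1)) - (hBianchi (e 0) (e 1) (e 3) (e 0)) + ((1 : ℝ)/2) * (hA2 (e 0) (e 2) (e 0) (e 0)) - (hA1 (e 0) (e 2) (e 1) (e 1)) + (hA2 (e 0) (e 2) (e 1) (e 1)) + hrp0211 - (hA1 (e 0) (e 2) (e 2) (e 2)) + (hBianchi (e 0) (e 2) (e 2) (e 2)) - (hA1 (e 0) (e 2) (e 3) (e 3)) - (hA2 (e 0) (e 3) (e 0) (e 1)) - hrp0301 + (hA1 (e 0) (e 3) (e 1) (e 0)) + (hBianchi (e 0) (e 3) (e 2) (e 3)) + ((1 : ℝ)/2) * (hA2 (e 1) (e 3) (e 0) (e 0)) + (2 : ℝ) * hνs'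
  have key21 : L (e 0) (e 2) (e 1) (e 0) + L (e 1) (e 2) (e 1) (e 1) + L (e 2) (e 2) (e 1) (e 2) + L (e 3) (e 2) (e 1) (e 3) = 0 := by
    linear_combination ((1 : ℝ)/2) * (hA2 (e 0) (e 1) (e 0) (e 2)) + ((1 : ℝ)/2) * hrp0102 + ((1 : ℝ)/2) * (hA2 (e 0) (e 1) (e 1) (e 3)) + ((1 : ℝ)/2) * hrp0113 - (hBianchi (e 0) (e 1) (e 2) (e 0)) - (hBianchi (e 0) (e 1) (e 3) (e 1)) + (hA1 (e 0) (e 2) (e 1) (e 0)) + (hA1 (e 0) (e 3) (e 1) (e 1)) + ((-1 : ℝ)/2) * (hA2 (e 0) (e 3) (e 1) (e 1)) + ((1 : ℝ)/2) * (hA2 (e 1) (e 2) (e 0) (e 0)) + (hA2 (e 1) (e 2) (e 1) (e 1)) + hrp1211 - (hA1 (e 1) (e 2) (e 2) (e 2)) + (hBianchi (e 1) (e 2) (e 2) (e 2)) - (hA1 (e 1) (e 2) (e 3) (e 3)) - hrp1301 + (hBianchi (e 1) (e 3) (e 2) (e 3))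
  have key22 : L (e 0) (e 2) (e 2) (e 0) + L (e 1) (e 2) (e 2) (e 1) + L (e 2) (e 2) (e 2) (e 2) + L (e 3) (e 2) (e 2) (e 3) = -2*ν := by
    linear_combination (hA2 (e 0) (e 1) (e 0) (e 1)) - hrp0101 + hrp0110 + (hBianchi (e 0) (e 1) (e 2) (e 3)) - (hBianchi (e 0) (e 1) (e 3) (e 2)) + ((1 : ℝ)/2) * (hA2 (e 0) (e 2) (e 0) (e 2)) + ((1 : ℝ)/2) * hrp0202 - (hA1 (e 0) (e 2) (e 1) (e 3)) + (hA2 (e 0) (e 2) (e 1) (e 3)) - (hA1 (e 0) (e 2) (e 2) (e 0)) + (hBianchi (e 0) (e 2) (e 2) (e 0)) - (hBianchi (e 0) (e 2) (e 3) (e 1)) + (hA1 (e 0) (e 3) (e 1) (e 2)) - (hA2 (e 0) (e 3) (e 1) (e 2)) + (hA1 (e 0) (e 3) (e 2) (e 1)) + hrp1203 + (hA1 (e 1) (e 2) (e 2) (e 1)) - (hBianchi (e 1) (e 2) (e 2) (e 1)) + ((1 : ℝ)/2) * (hA2 (e 1) (e 3) (e 0) (e 2)) + ((-1 : ℝ)/2)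 * hrp1302 + hrp2200 - hrp2211 + (hBianchi (e 2) (e 2) (e 3) (e 3)) - hrp2301 + (2 : ℝ) * hν'
  have key23 : L (e 0) (e 2) (e 3) (e 0) + L (e 1) (e 2) (e 3) (e 1) + L (e 2) (e 2) (e 3) (e 2) + L (e 3) (e 2) (e 3) (e 3) = 0 := by
    linear_combination ((1 : ℝ)/2) * (hA2 (e 0) (e 1) (e 0) (e 0)) + hrp0100 + ((1 : ℝ)/2) * (hA2 (e 0) (e 1) (e 1) (e 1)) + hrp0111 - (hBianchi (e 0) (e 1) (e 2) (e 2)) - (hBianchi (e 0) (e 1) (e 3) (e 3)) + (hA2 (e 0) (e 2) (e 0) (e 3)) + hrp0203 + (hA1 (e 0) (e 2) (e 1) (e 2)) - (hA2 (e 0) (e 2) (e 1) (e 2)) + (hA1 (e 0) (e 3) (e 1) (e 3)) + ((-1 : ℝ)/2) * (hA2 (e 0) (e 3) (e 1) (e 3)) + ((1 : ℝ)/2) * hrp0313 + ((1 : ℝ)/2) * (hA2 (e 1) (e 2) (e 0) (e 2)) + ((-1 : ℝ)/2) * hrp1202 + (hA2 (e 1) (e 2) (e 1) (e 3)) + hrp1213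 - (hA1 (e 1) (e 2) (e 2) (e 0)) + (hBianchi (e 1) (e 2) (e 2) (e 0)) - (hBianchi (e 1) (e 2) (e 3) (e 1)) - hrp1303 + (hA1 (e 1) (e 3) (e 2) (e 1)) + hrp2210 - hrp2311 + (hA1 (e 2) (e 3) (e 3) (e 3))
  have key30 : L (e 0) (e 3) (e 0) (e 0) + L (e 1) (e 3) (e 0) (e 1) + L (e 2) (e 3) (e 0) (e 2) + L (e 3) (e 3) (e 0) (e 3) = 0 := by
    linear_combination ((-1 : ℝ)/2) * (hA2 (e 0) (e 1) (e 0) (e 2)) + ((-1 : ℝ)/2) * hrp0102 + ((-1 : ℝ)/2) * (hA2 (e 0) (e 1) (e 1) (e 3)) + ((-1 : ℝ)/2) * hrp0113 + (hBianchi (e 0) (e 1) (e 2) (e 0)) + (hBianchi (e 0) (e 1) (e 3) (e 1)) - (hA1 (e 0) (e 2) (e 1) (e 0)) - hrp0210 + (hBianchi (e 0) (e 2) (e 3) (e 2)) + (hA2 (e 0) (e 3) (e 0) (e 0)) + hrp0300 - (hA1 (e 0) (e 3) (e 1) (e 1)) + ((1 : ℝ)/2) * (hA2 (e 0) (e 3)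 (e 1) (e 1)) - (hA1 (e 0) (e 3) (e 2) (e 2)) - (hA1 (e 0) (e 3) (e 3) (e 3)) + (hBianchi (e 0) (e 3) (e 3) (e 3)) + ((-1 : ℝ)/2) * (hA2 (e 1) (e 2) (e 0) (e 0))
  have key31 : L (e 0) (e 3) (e 1) (e 0) + L (e 1) (e 3) (e 1) (e 1) + L (e 2) (e 3) (e 1) (e 2) + L (e 3) (e 3) (e 1) (e 3) = -2*νs := by
    linear_combination (hA2 (e 0) (e 1) (e 0) (e 3)) - hrp0103 + (hBianchi (e 0) (e 1) (e 2) (e 1)) - (hBianchi (e 0) (e 1) (e 3) (e 0)) - (hA1 (e 0) (e 2) (e 1) (e 1)) + ((1 : ℝ)/2) * (hA2 (e 0) (e 2) (e 1) (e 1)) + (hA1 (e 0) (e 3) (e 1) (e 0)) - (hA2 (e 1) (e 2) (e 0) (e 1)) - hrp1210 + (hBianchi (e 1) (e 2) (e 3) (e 2)) + (hA2 (e 1) (e 3) (e 0) (e 0)) + hrp1300 + ((1 : ℝ)/2) * (hA2 (e 1) (e 3) (e 1) (e 1)) - (hA1 (e 1) (e 3) (e 2) (e 2)) - (hA1 (e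 1) (e 3) (e 3) (e 3)) + (hBianchi (e 1) (e 3) (e 3) (e 3)) + (2 : ℝ) * hνs'
  have key32 : L (e 0) (e 3) (e 2) (e 0) + L (e 1) (e 3) (e 2) (e 1) + L (e 2) (e 3) (e 2) (e 2) + L (e 3) (e 3) (e 2) (e 3) = 0 := by
    linear_combination ((-1 : ℝ)/2) * (hA2 (e 0) (e 1) (e 0) (e 0)) - hrp0100 + ((-1 : ℝ)/2) * (hA2 (e 0) (e 1) (e 1) (e 1)) - hrp0111 + (hBianchi (e 0) (e 1) (e 2) (e 2)) + (hBianchi (e 0) (e 1) (e 3) (e 3)) - (hA2 (e 0) (e 2) (e 0) (e 3)) - hrp0203 - (hA1 (e 0) (e 2) (e 1) (e 2)) + (hA2 (e 0) (e 2) (e 1) (e 2)) + (hBianchi (e 0) (e 2) (e 3) (e 0)) + (hA2 (e 0) (e 3) (e 0) (e 2)) + hrp0302 - (hA1 (e 0) (e 3) (e 1) (e 3)) + ((1 : ℝ)/2) * (hA2 (e 0) (e 3) (e 1) (e 3)) + ((-1 : ℝ)/2) * hrp0313 - (hA1 (e 0) (e 3) (e 2) (e 0)) + ((-1 : ℝ)/2)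 * (hA2 (e 1) (e 2) (e 0) (e 2)) + ((1 : ℝ)/2) * hrp1202 + hrp1303 + hrp2300 - (hA1 (e 2) (e 3) (e 3) (e 3)) + (hBianchi (e 2) (e 3) (e 3) (e 3))
  have key33 : L (e 0) (e 3) (e 3) (e 0) + L (e 1) (e 3) (e 3) (e 1) + L (e 2) (e 3) (e 3) (e 2) + L (e 3) (e 3) (e 3) (e 3) = -2*ν := by
    linear_combination (hA2 (e 0) (e 1) (e 0) (e 1)) - hrp0101 + hrp0110 + (hBianchi (e 0) (e 1) (e 2) (e 3)) - (hBianchi (e 0) (e 1) (e 3) (e 2)) - (hA1 (e 0) (e 2) (e 1) (e 3)) + ((1 : ℝ)/2) * (hA2 (e 0) (e 2) (e 1) (e 3)) + ((-1 : ℝ)/2) * hrp0213 + (hA2 (e 0) (e 3) (e 0) (e 3)) + hrp0303 + (hA1 (e 0) (e 3) (e 1) (e 2)) - (hA2 (e 0) (e 3) (e 1) (e 2)) - (hA2 (e 1) (e 2) (e 0) (e 3)) + (hBianchi (e 1) (e 2) (e 3) (e 0)) + (hA2 (e 1) (e 3) (e 0) (e 2)) + ((1 : ℝ)/2) * (hA2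 (e 1) (e 3) (e 1) (e 3)) + ((1 : ℝ)/2) * hrp1313 - (hA1 (e 1) (e 3) (e 2) (e 0)) - (hA1 (e 1) (e 3) (e 3) (e 1)) + (hBianchi (e 1) (e 3) (e 3) (e 1)) + hrp2310 + hrp3311 + (2 : ℝ) * hν'
  have keystar0 : L (e 0) (e 0) (e 0) (e 2) + L (e 1) (e 0) (e 0) (e 3) + L (e 2) (e 0) (e 0) (e 0) + L (e 3) (e 0) (e 0) (e 1) = -2*νs := by
    linear_combination (hA1 (e 0) (e 0) (e 0) (e 2)) - (hA2 (e 0) (e 0) (e 0) (e 2)) - (hA2 (e 0) (e 0) (e 1) (e 3)) + (hBianchi (e 0) (e 0) (e 1) (e 3)) + (hBianchi (e 0) (e 0) (e 2) (e 0)) + (hBianchi (e 0) (e 0) (e 3) (e 1)) + (hA2 (e 0) (e 1) (e 0) (e 3)) - (hBianchi (e 0) (e 1) (e 3) (e 0)) + ((-1 : ℝ)/2) * (hA2 (e 0) (e 2) (e 0) (e 0)) - (hA2 (e 0) (e 3) (e 0) (e 1)) + (hA1 (e 0) (e 3) (e 1) (e 0)) + ((1 : ℝ)/2) * (hA2 (e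 1) (e 3) (e 0) (e 0)) + (2 : ℝ) * hνs'
  have keystar1 : L (e 0) (e 1) (e 1) (e 2) + L (e 1) (e 1) (e 1) (e 3) + L (e 2) (e 1) (e 1) (e 0) + L (e 3) (e 1) (e 1) (e 1) = -2*νs := by
    linear_combination (-2 : ℝ) * hrp0103 - (hA1 (e 0) (e 1) (e 1) (e 2)) + (hA2 (e 0) (e 1) (e 1) (e 2)) + (hBianchi (e 0) (e 1) (e 1) (e 2)) + (hBianchi (e 0) (e 1) (e 2) (e 1)) - (hA1 (e 0) (e 2) (e 1) (e 1)) + ((1 : ℝ)/2) * (hA2 (e 0) (e 2) (e 1) (e 1)) - (hA2 (e 1) (e 1) (e 0) (e 2)) + (hA1 (e 1) (e 1) (e 1) (e 3)) - (hA2 (e 1) (e 1) (e 1) (e 3)) + (hBianchi (e 1) (e 1) (e 2) (e 0)) + (hBianchi (e 1) (e 1) (e 3) (e 1)) - (hA2 (e 1) (e 2) (e 0) (e 1)) + ((-1 : ℝ)/2) * (hA2 (e 1) (e 3) (e 1) (e 1)) + (2 : ℝ) * hνs'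
  have keystar2 : L (e 0) (e 2) (e 2) (e 2) + L (e 1) (e 2) (e 2) (e 3) + L (e 2) (e 2) (e 2) (e 0) + L (e 3) (e 2) (e 2) (e 1) = -2*νs := by
    linear_combination (hA2 (e 0) (e 1) (e 0) (e 3)) - hrp0103 + (hBianchi (e 0) (e 1) (e 2) (e 1)) - (hBianchi (e 0) (e 1) (e 3) (e 0)) + ((1 : ℝ)/2) * (hA2 (e 0) (e 2) (e 0) (e 0)) + hrp0200 - (hA1 (e 0) (e 2) (e 1) (e 1)) + (hA2 (e 0) (e 2) (e 1) (e 1)) + hrp0211 + (hA1 (e 0) (e 2) (e 2) (e 2)) - (hBianchi (e 0) (e 2) (e 2) (e 2)) - (hBianchi (e 0) (e 2) (e 3) (e 3)) - (hA2 (e 0) (e 3) (e 0) (e 1)) - hrp0301 + (hA1 (e 0) (e 3) (e 1) (e 0)) + (hA1 (e 0) (e 3) (e 2) (e 3)) + hrp1201 - (hA1 (e 1) (e 2) (e 2) (e 3)) + (hBianchi (e 1) (e 2) (e 2) (e 3)) + ((1 : ℝ)/2) * (hA2 (e 1) (e 3) (e 0) (e 0)) + (hA2 (e 2) (e 2) (e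 0) (e 2)) - (hA2 (e 2) (e 2) (e 1) (e 3)) + (hBianchi (e 2) (e 2) (e 3) (e 1)) - hrp2303 + (2 : ℝ) * hνs'
  have keystar3 : L (e 0) (e 3) (e 3) (e 2) + L (e 1) (e 3) (e 3) (e 3) + L (e 2) (e 3) (e 3) (e 0) + L (e 3) (e 3) (e 3) (e 1) = -2*νs := by
    linear_combination (2 : ℝ) * (hA2 (e 0) (e 1) (e 0) (e 3)) - (2 : ℝ) * (hBianchi (e 0) (e 1) (e 3) (e 0)) + ((1 : ℝ)/2) * (hA2 (e 0) (e 2) (e 1) (e 1)) + hrp0211 - (hBianchi (e 0) (e 2) (e 3) (e 3)) - (hA2 (e 0) (e 3) (e 0) (e 1)) - hrp0301 + (2 : ℝ) * (hA1 (e 0) (e 3) (e 1) (e 0)) + hrp0310 + (hA1 (e 0) (e 3) (e 2) (e 3)) + (hA2 (e 1) (e 3) (e 0) (e 0)) + ((1 : ℝ)/2) * (hA2 (e 1) (e 3) (e 1) (e 1)) + hrp1311 + (hA1 (e 1) (e 3) (e 3) (e 3)) - (hBianchi (e 1) (e 3) (e 3) (e 3)) + (hA2 (e 2) (e 3) (e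 0) (e 3)) + (hA2 (e 3) (e 3) (e 1) (e 3)) + (2 : ℝ) * hνs'
  refine ⟨?_, ?_, ?_⟩
  · -- Ricci formula
    have fm2 : ((⟨2, by omega⟩ : Fin 4)) = (2 : Fin 4) := rfl
    have fm3 : ((⟨3, by omega⟩ : Fin 4)) = (3 : Fin 4) := rfl
    have hg00 : ⟪e 0, e 0⟫ = (1:ℝ) := by rw [hg]; exact if_pos rfl
    have hg01 : ⟪e 0, e 1⟫ = (0:ℝ) := by rw [hg]; exact if_neg (by decide)
    have hg02 : ⟪e 0, e 2⟫ = (0:ℝ) := by rw [hg]; exact if_neg (by decide)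
    have hg03 : ⟪e 0, e 3⟫ = (0:ℝ) := by rw [hg]; exact if_neg (by decide)
    have hg10 : ⟪e 1, e 0⟫ = (0:ℝ) := by rw [hg]; exact if_neg (by decide)
    have hg11 : ⟪e 1, e 1⟫ = (1:ℝ) := by rw [hg]; exact if_pos rfl
    have hg12 : ⟪e 1, e 2⟫ = (0:ℝ) := by rw [hg]; exact if_neg (by decide)
    have hg13 : ⟪e 1, e 3⟫ = (0:ℝ) := by rw [hg]; exact if_neg (by decide)
    have hg20 : ⟪e 2, e 0⟫ = (0:ℝ) := by rw [hg]; exact if_neg (by decide)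
    have hg21 : ⟪e 2, e 1⟫ = (0:ℝ) := by rw [hg]; exact if_neg (by decide)
    have hg22 : ⟪e 2, e 2⟫ = (1:ℝ) := by rw [hg]; exact if_pos rfl
    have hg23 : ⟪e 2, e 3⟫ = (0:ℝ) := by rw [hg]; exact if_neg (by decide)
    have hg30 : ⟪e 3, e 0⟫ = (0:ℝ) := by rw [hg]; exact if_neg (by decide)
    have hg31 : ⟪e 3, e 1⟫ = (0:ℝ) := by rw [hg]; exact if_neg (by decide)
    have hg32 : ⟪e 3, e 2⟫ = (0:ℝ) := by rw [hg]; exact if_neg (by decide)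
    have hg33 : ⟪e 3, e 3⟫ = (1:ℝ) := by rw [hg]; exact if_pos rfl
    let b : Basis (Fin 4) ℝ V := Basis.mk hON.linearIndependent (by rw [hspan])
    have hbe : ∀ i, b i = e i := fun i => Basis.mk_apply hON.linearIndependent _ i
    refine bilin_eq_of_basis b (fun y z => ∑ i : Fin 4, L (e i) y z (e i))
      (fun y z => -2 * ν * ⟪y, z⟫ - 2 * νs * ⟪y, P z⟫)
      (by intro x y z; simp [map_add, LinearMap.add_apply, Finset.sum_add_distrib])
      (by intro c x z; simp [map_smul, LinearMap.smul_apply, smul_eq_mul, Finset.mul_sum])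
      (by intro x y z; simp [map_add, LinearMap.add_apply, Finset.sum_add_distrib])
      (by intro c x z; simp [map_smul, LinearMap.smul_apply, smul_eq_mul, Finset.mul_sum])
      (by intro x y z; simp [inner_add_left]; try ring)
      (by intro c x z; simp [real_inner_smul_left]; try ring)
      (by intro x y z; simp [inner_add_right, map_add]; try ring)
      (by intro c x z; simp [real_inner_smul_right, map_smul]; try ring)
      ?_
    intro i j
    simp only [hbe]
    fin_cases i <;> fin_cases j
    · norm_num [Fin.sum_univ_four, fm2, fm3, hp0, hp1, hp2, hp3, hg00, hg01, hg02, hg03, hON.1]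
      linear_combination key00
    · norm_num [Fin.sum_univ_four, fm2, fm3, hp0, hp1, hp2, hp3, hg00, hg01, hg02, hg03]
      linear_combination key01
    · norm_num [Fin.sum_univ_four, fm2, fm3, hp0, hp1, hp2, hp3, hg00, hg01, hg02, hg03, hON.1]
      linear_combination key02
    · norm_num [Fin.sum_univ_four, fm2, fm3, hp0, hp1, hp2, hp3, hg00, hg01, hg02, hg03]
      linear_combination key03
    · norm_num [Fin.sum_univ_four, fm2, fm3, hp0, hp1, hp2, hp3, hg10, hg11, hg12, hg13]
      linear_combination key10
    · norm_num [Fin.sum_univ_four, fm2, fm3, hp0, hp1, hp2, hp3, hg10, hg11, hg12, hg13, hON.1]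
      linear_combination key11
    · norm_num [Fin.sum_univ_four, fm2, fm3, hp0, hp1, hp2, hp3, hg10, hg11, hg12, hg13]
      linear_combination key12
    · norm_num [Fin.sum_univ_four, fm2, fm3, hp0, hp1, hp2, hp3, hg10, hg11, hg12, hg13, hON.1]
      linear_combination key13
    · norm_num [Fin.sum_univ_four, fm2, fm3, hp0, hp1, hp2, hp3, hg20, hg21, hg22, hg23, hON.1]
      linear_combination key20
    · norm_num [Fin.sum_univ_four, fm2, fm3, hp0, hp1, hp2, hp3, hg20, hg21, hg22, hg23]
      linear_combination key21
    · norm_num [Fin.sum_univ_four, fm2, fm3, hp0, hp1, hp2, hp3, hg20, hg21, hg22, hg23, hON.1]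
      linear_combination key22
    · norm_num [Fin.sum_univ_four, fm2, fm3, hp0, hp1, hp2, hp3, hg20, hg21, hg22, hg23]
      linear_combination key23
    · norm_num [Fin.sum_univ_four, fm2, fm3, hp0, hp1, hp2, hp3, hg30, hg31, hg32, hg33]
      linear_combination key30
    · norm_num [Fin.sum_univ_four, fm2, fm3, hp0, hp1, hp2, hp3, hg30, hg31, hg32, hg33, hON.1]
      linear_combination key31
    · norm_num [Fin.sum_univ_four, fm2, fm3, hp0, hp1, hp2, hp3, hg30, hg31, hg32, hg33]
      linear_combination key32
    · norm_num [Fin.sum_univ_four, fm2, fm3, hp0, hp1, hp2, hp3, hg30, hg31, hg32, hg33, hON.1]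
      linear_combination key33
  · simp only [Fin.sum_univ_four]
    linear_combination key00 + key11 + key22 + key33
  · simp only [Fin.sum_univ_four, hp0, hp1, hp2, hp3]
    linear_combination keystar0 + keystar1 + keystar2 + keystar3
end

section
/- Let (V, P, g) be 4-dimensional with tr P = 0, and let L be a Riemannian P-tensor on V. Then the almost Einstein condition ρ(L)(y, z) = (1/4){τ(L) g(y, z) + τ*(L) g(y, Pz)} holds for all y, z ∈ V. -/
open scoped RealInnerProductSpace
open Module

variable {V : Type*} [NormedAddCommGroup V] [InnerProductSpace ℝ V]
  [FiniteDimensional ℝ V]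

lemma expand_slot1 {κ : Type*} [Fintype κ] (c : OrthonormalBasis κ ℝ V)
    (L : V →ₗ[ℝ] V →ₗ[ℝ] V →ₗ[ℝ] V →ₗ[ℝ] ℝ) (y z : V) (x w : V) :
    L x y z w = ∑ j, ⟪c j, x⟫ * L (c j) y z w := by
  conv_lhs => rw [← c.sum_repr' x]
  simp [LinearMap.sum_apply, LinearMap.smul_apply]

lemma expand_slot4 {κ : Type*} [Fintype κ] (c : OrthonormalBasis κ ℝ V)
    (L : V →ₗ[ℝ] V →ₗ[ℝ] V →ₗ[ℝ] V →ₗ[ℝ] ℝ) (x y z : V) (M : V →ₗ[ℝ] V) (w : V) :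
    L x y z (M w) = ∑ j, ⟪c j, w⟫ * L x y z (M (c j)) := by
  conv_lhs => rw [← c.sum_repr' w]
  simp [map_sum, Finset.mul_sum]

lemma sum_L_eq_sum_L {ι κ : Type*} [Fintype ι] [Fintype κ]
    (b : OrthonormalBasis ι ℝ V) (c : OrthonormalBasis κ ℝ V)
    (L : V →ₗ[ℝ] V →ₗ[ℝ] V →ₗ[ℝ] V →ₗ[ℝ] ℝ) (M : V →ₗ[ℝ] V) (y z : V) :
    ∑ i, L (b i) y z (M (b i)) = ∑ j, L (c j) y z (M (c j)) := by
  calc ∑ i, L (b i) y z (M (b i))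
      = ∑ i, ∑ j, ⟪c j, b i⟫ * L (c j) y z (M (b i)) :=
        Finset.sum_congr rfl fun i _ => expand_slot1 c L y z _ _
    _ = ∑ j, ∑ i, ⟪c j, b i⟫ * L (c j) y z (M (b i)) := Finset.sum_comm
    _ = ∑ j, L (c j) y z (M (c j)) := by
        refine Finset.sum_congr rfl fun j _ => ?_
        rw [expand_slot4 b L (c j) y z M (c j)]
        refine Finset.sum_congr rfl fun i _ => ?_
        rw [real_inner_comm]

lemma expand_slot2 {κ : Type*} [Fintype κ] (c : OrthonormalBasis κ ℝ V)
    (L : V →ₗ[ℝ] V →ₗ[ℝ] V →ₗ[ℝ] V →ₗ[ℝ] ℝ) (x z w : V) (u : V) :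
    L x u z w = ∑ j, ⟪c j, u⟫ * L x (c j) z w := by
  conv_lhs => rw [← c.sum_repr' u]
  simp [map_sum, LinearMap.sum_apply, LinearMap.smul_apply]

lemma expand_slot3 {κ : Type*} [Fintype κ] (c : OrthonormalBasis κ ℝ V)
    (L : V →ₗ[ℝ] V →ₗ[ℝ] V →ₗ[ℝ] V →ₗ[ℝ] ℝ) (x y w : V) (u : V) :
    L x y u w = ∑ j, ⟪c j, u⟫ * L x y (c j) w := by
  conv_lhs => rw [← c.sum_repr' u]
  simp [map_sum, LinearMap.sum_apply, LinearMap.smul_apply]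

lemma trace_L_eq_trace_L {ι κ : Type*} [Fintype ι] [Fintype κ]
    (b : OrthonormalBasis ι ℝ V) (c : OrthonormalBasis κ ℝ V)
    (L : V →ₗ[ℝ] V →ₗ[ℝ] V →ₗ[ℝ] V →ₗ[ℝ] ℝ) (M : V →ₗ[ℝ] V) :
    ∑ j, ∑ i, L (b i) (b j) (b j) (M (b i)) =
      ∑ j, ∑ i, L (c i) (c j) (c j) (M (c i)) := by
  have step1 : ∑ j, ∑ i, L (b i) (b j) (b j) (M (b i)) =
      ∑ j : ι, ∑ i : κ, L (c i) (b j) (b j) (M (c i)) :=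
    Finset.sum_congr rfl fun j _ => sum_L_eq_sum_L b c L M _ _
  rw [step1, Finset.sum_comm]
  rw [show ∑ i : κ, ∑ j : ι, L (c i) (b j) (b j) (M (c i)) =
      ∑ i : κ, ∑ j : κ, L (c i) (c j) (c j) (M (c i)) from
    Finset.sum_congr rfl fun i _ => ?_, Finset.sum_comm]
  calc ∑ j : ι, L (c i) (b j) (b j) (M (c i))
      = ∑ j : ι, ∑ k : κ, ⟪c k, b j⟫ * L (c i) (c k) (b j) (M (c i)) :=
        Finset.sum_congr rfl fun j _ => expand_slot2 c L _ _ _ _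
    _ = ∑ k : κ, ∑ j : ι, ⟪c k, b j⟫ * L (c i) (c k) (b j) (M (c i)) := Finset.sum_comm
    _ = ∑ k : κ, L (c i) (c k) (c k) (M (c i)) := by
        refine Finset.sum_congr rfl fun k _ => ?_
        rw [expand_slot3 b L (c i) (c k) (M (c i)) (c k)]
        refine Finset.sum_congr rfl fun j _ => ?_
        rw [real_inner_comm]

lemma pair_symm (L : V →ₗ[ℝ] V →ₗ[ℝ] V →ₗ[ℝ] V →ₗ[ℝ] ℝ)
    (hA1 : ∀ x y z w : V, L x y z w = - L y x z w)
    (hA2 : ∀ x y z w : V, L x y z w = - L x y w z)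
    (hBianchi : ∀ x y z w : V, L x y z w + L y z x w + L z x y w = 0)
    (x y z w : V) : L x y z w = L z w x y := by
  have b1 := hBianchi x y z w
  have b2 := hBianchi y z w x
  have b3 := hBianchi z w x y
  have b4 := hBianchi w x y z
  linarith [hA1 z x y w, hA2 y z x w, hA2 z w x y, hA1 w y z x, hA2 y w x z,
    hA2 y w z x, hA1 w x z y, hA2 x w y z, hA2 x z w y, hA1 w x y z,
    hA2 x y w z, hA2 x w z y]


/-- The Ricci tensor ρ(L)(y,z) = Σᵢ L(eᵢ, y, z, eᵢ) of a (0,4)-tensor L,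
computed in an orthonormal basis. -/
noncomputable def ricci (L : V →ₗ[ℝ] V →ₗ[ℝ] V →ₗ[ℝ] V →ₗ[ℝ] ℝ) (y z : V) : ℝ :=
  ∑ i, L (stdOrthonormalBasis ℝ V i) y z (stdOrthonormalBasis ℝ V i)

/-- The scalar curvature τ(L) = Σⱼ ρ(L)(eⱼ, eⱼ). -/
noncomputable def scalarCurv (L : V →ₗ[ℝ] V →ₗ[ℝ] V →ₗ[ℝ] V →ₗ[ℝ] ℝ) : ℝ :=
  ∑ j, ricci L (stdOrthonormalBasis ℝ V j) (stdOrthonormalBasis ℝ V j)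

/-- The associated Ricci tensor ρ*(L)(y,z) = Σᵢ L(eᵢ, y, z, Peᵢ). -/
noncomputable def ricciStar (P : V →ₗ[ℝ] V)
    (L : V →ₗ[ℝ] V →ₗ[ℝ] V →ₗ[ℝ] V →ₗ[ℝ] ℝ) (y z : V) : ℝ :=
  ∑ i, L (stdOrthonormalBasis ℝ V i) y z (P (stdOrthonormalBasis ℝ V i))

/-- The associated scalar curvature τ*(L) = Σⱼ ρ*(L)(eⱼ, eⱼ). -/
noncomputable def scalarCurvStar (P : V →ₗ[ℝ] V)
    (L : V →ₗ[ℝ] V →ₗ[ℝ] V →ₗ[ℝ] V →ₗ[ℝ] ℝ) : ℝ :=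
  ∑ j, ricciStar P L (stdOrthonormalBasis ℝ V j) (stdOrthonormalBasis ℝ V j)

/-- Let (V, P, g) be 4-dimensional with tr P = 0, and let L be a
Riemannian P-tensor on V. Then the almost Einstein condition
ρ(L)(y,z) = (1/4){τ(L) g(y,z) + τ*(L) g(y,Pz)} holds for all y, z ∈ V. -/
theorem riemannian_P_tensor_almost_einstein_dim4
    (hdim : finrank ℝ V = 4)
    (P : V →ₗ[ℝ] V)
    (hP2 : ∀ x : V, P (P x) = x)
    (hPg : ∀ x y : V, ⟪P x, P y⟫ = ⟪x, y⟫)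
    (htr : LinearMap.trace ℝ V P = 0)
    (L : V →ₗ[ℝ] V →ₗ[ℝ] V →ₗ[ℝ] V →ₗ[ℝ] ℝ)
    (hA1 : ∀ x y z w : V, L x y z w = - L y x z w)
    (hA2 : ∀ x y z w : V, L x y z w = - L x y w z)
    (hBianchi : ∀ x y z w : V, L x y z w + L y z x w + L z x y w = 0)
    (hRP : ∀ x y z w : V, L x y (P z) (P w) = L x y z w) :
    ∀ y z : V,
      ricci L y z = (1 / 4 : ℝ) *
        (scalarCurv L * ⟪y, z⟫ + scalarCurvStar P L * ⟪y, P z⟫) := by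
  intro y z
  have hz12 : ∀ x u w : V, L x x u w = 0 := fun x u w => by
    have := hA1 x x u w; linarith
  have hz34 : ∀ x u w : V, L x u w w = 0 := fun x u w => by
    have := hA2 x u w w; linarith
  have hps := pair_symm L hA1 hA2 hBianchi
  have hsymP : P.IsSymmetric := fun u v => by
    calc ⟪P u, v⟫ = ⟪P u, P (P v)⟫ := by rw [hP2]
      _ = ⟪u, P v⟫ := hPg _ _
  set b := hsymP.eigenvectorBasis hdim with hbdef
  set μ := hsymP.eigenvalues hdim with hmudef
  have hb : ∀ i, P (b i) = μ i • b i := fun i => by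
    have h := hsymP.apply_eigenvectorBasis hdim i
    exact_mod_cast h
  have hbne : ∀ i, b i ≠ 0 := fun i => by
    have := (hsymP.eigenvectorBasis hdim).toBasis.ne_zero i
    simpa using this
  have hμpm : ∀ i, μ i = 1 ∨ μ i = -1 := fun i => by
    have h := hP2 (b i)
    rw [hb i, map_smul, hb i, smul_smul] at h
    have h2 : μ i * μ i = 1 := by
      refine smul_left_injective ℝ (hbne i) ?_
      show (μ i * μ i) • b i = (1 : ℝ) • b i
      rw [h, one_smul]
    exact mul_self_eq_one_iff.mp h2
  have htrμ : ∑ i, μ i = 0 := by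
    have hmat : ∀ i, (LinearMap.toMatrix b.toBasis b.toBasis P) i i = μ i := fun i => by
      rw [LinearMap.toMatrix_apply]
      simp [OrthonormalBasis.coe_toBasis, hb i]
    have ht := LinearMap.trace_eq_matrix_trace ℝ b.toBasis P
    rw [htr] at ht
    rw [Matrix.trace] at ht
    simp only [Matrix.diag] at ht
    rw [← Finset.sum_congr rfl fun i _ => hmat i]
    exact ht.symm
  have mix34 : ∀ (u v : V) (k l : Fin 4), μ k ≠ μ l → L u v (b k) (b l) = 0 := by
    intro u v k l hkl
    have h := hRP u v (b k) (b l)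
    rw [hb k, hb l] at h
    simp only [map_smul, LinearMap.smul_apply, smul_eq_mul] at h
    rcases hμpm k with hk | hk <;> rcases hμpm l with hl | hl <;>
      rw [hk, hl] at h hkl <;> first
      | exact absurd rfl hkl
      | linarith
  have mix12 : ∀ (k l : Fin 4) (u v : V), μ k ≠ μ l → L (b k) (b l) u v = 0 := by
    intro k l u v hkl
    rw [hps]
    exact mix34 u v k l hkl
  set f : Fin 4 → Fin 4 → ℝ := fun i l => L (b i) (b l) (b l) (b i) with hfdef
  have hfmix : ∀ i l, μ i ≠ μ l → f i l = 0 := fun i l h =>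
    mix34 (b i) (b l) l i (Ne.symm h)
  have hfsym : ∀ i l, f i l = f l i := fun i l => hps (b i) (b l) (b l) (b i)
  have hfdiag : ∀ i, f i i = 0 := fun i => hz12 _ _ _
  have hμne : ∀ j, μ j ≠ 0 := fun j => by
    rcases hμpm j with h | h <;> rw [h] <;> norm_num
  have hcard : ∀ j, (Finset.univ.filter (fun i => μ i = μ j)).card = 2 := by
    intro j
    set s := Finset.univ.filter (fun i => μ i = μ j) with hs
    have h1 : ∑ i ∈ s, μ i = (s.card : ℝ) * μ j := by
      rw [Finset.sum_congr rfl (fun i hi => (Finset.mem_filter.mp hi).2)]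
      rw [Finset.sum_const, nsmul_eq_mul]
    have h2 : ∑ i ∈ sᶜ, μ i = (sᶜ.card : ℝ) * (-(μ j)) := by
      rw [Finset.sum_congr rfl (fun i hi => ?_)]
      · rw [Finset.sum_const, nsmul_eq_mul]
      · have hi' : ¬ μ i = μ j := by
          have := Finset.mem_compl.mp hi
          simpa [hs] using this
        rcases hμpm i with h | h <;> rcases hμpm j with h' | h' <;>
          [ exact absurd (h.trans h'.symm) hi';
            (rw [h, h']; try norm_num);
            (rw [h, h']; try norm_num);
            exact absurd (h.trans h'.symm) hi' ]
    have h3 : ∑ i ∈ s, μ i + ∑ i ∈ sᶜ, μ i = 0 := by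
      rw [Finset.sum_add_sum_compl]; exact htrμ
    have hcards : s.card + sᶜ.card = 4 := by
      have := Finset.card_add_card_compl s
      simpa using this
    rw [h1, h2] at h3
    have hcc : (s.card : ℝ) = (sᶜ.card : ℝ) := by
      rcases hμpm j with h | h <;> rw [h] at h3 <;> linarith
    have : s.card = sᶜ.card := Nat.cast_injective hcc
    omega
  have hpartner : ∀ j, ∃ p, p ≠ j ∧ μ p = μ j ∧
      (Finset.univ.filter (fun i => μ i = μ j)) = {j, p} := by
    intro j
    obtain ⟨a, a', haa, hS⟩ := Finset.card_eq_two.mp (hcard j)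
    have hj : j ∈ Finset.univ.filter (fun i => μ i = μ j) := by simp
    rw [hS] at hj
    simp only [Finset.mem_insert, Finset.mem_singleton] at hj
    rcases hj with h | h
    · have hS' : Finset.univ.filter (fun i => μ i = μ j) = {j, a'} := by
        rw [hS, ← h]
      have ha' : a' ∈ Finset.univ.filter (fun i => μ i = μ j) := by
        rw [hS']; simp
      exact ⟨a', fun e => haa ((e.trans h).symm ▸ rfl),
        (Finset.mem_filter.mp ha').2, hS'⟩
    · have hS' : Finset.univ.filter (fun i => μ i = μ j) = {j, a} := by
        rw [hS, ← h, Finset.pair_comm]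
      have ha : a ∈ Finset.univ.filter (fun i => μ i = μ j) := by
        rw [hS']; simp
      exact ⟨a, fun e => haa (e.trans h), (Finset.mem_filter.mp ha).2, hS'⟩
  set g : Fin 4 → ℝ := fun l => ∑ i, f i l with hgdef
  have claim_g : ∀ (l p : Fin 4), p ≠ l → μ p = μ l →
      (Finset.univ.filter (fun i => μ i = μ l)) = {l, p} → g l = f p l := by
    intro l p h1 _h2 h3
    have hsplit := Finset.sum_filter_add_sum_filter_not Finset.univ
      (fun i => μ i = μ l) (fun i => f i l)
    have hzero : ∑ i ∈ Finset.univ.filter (fun i => ¬ μ i = μ l), f i l = 0 :=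
      Finset.sum_eq_zero fun i hi => hfmix i l (Finset.mem_filter.mp hi).2
    have : g l = ∑ i ∈ Finset.univ.filter (fun i => μ i = μ l), f i l := by
      rw [hgdef]
      simp only []
      rw [← hsplit, hzero, add_zero]
    rw [this, h3, Finset.sum_pair (Ne.symm h1), hfdiag, zero_add]
  have hdiag : ∀ j, g j = (1/4 : ℝ) * ((∑ l, g l) + μ j * (∑ l, μ l * g l)) := by
    intro j
    obtain ⟨p, hpj, hμp, hS⟩ := hpartner j
    have hSp : (Finset.univ.filter (fun i => μ i = μ p)) = {p, j} := by
      rw [hμp, hS, Finset.pair_comm]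
    have hgj : g j = f p j := claim_g j p hpj hμp hS
    have hgp : g p = f j p := claim_g p j (Ne.symm hpj) hμp.symm hSp
    have hcomb : (∑ l, g l) + μ j * (∑ l, μ l * g l) =
        ∑ l, (1 + μ j * μ l) * g l := by
      rw [Finset.mul_sum, ← Finset.sum_add_distrib]
      exact Finset.sum_congr rfl fun l _ => by ring
    have hterm : ∀ l : Fin 4, (1 + μ j * μ l) * g l =
        if μ l = μ j then 2 * g l else 0 := by
      intro l
      by_cases h : μ l = μ j
      · rw [if_pos h, h]
        rcases hμpm j with h' | h' <;> rw [h'] <;> ring_nf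
      · rw [if_neg h]
        have : μ j * μ l = -1 := by
          rcases hμpm j with h' | h' <;> rcases hμpm l with h'' | h'' <;>
            [ exact absurd (h''.trans h'.symm) h;
              (rw [h', h'']; norm_num);
              (rw [h', h'']; norm_num);
              exact absurd (h''.trans h'.symm) h ]
        rw [this]; ring
    have hfilter : ∑ l, (1 + μ j * μ l) * g l =
        ∑ l ∈ Finset.univ.filter (fun l => μ l = μ j), 2 * g l := by
      rw [Finset.sum_filter]
      exact Finset.sum_congr rfl fun l _ => hterm l
    rw [hcomb, hfilter, hS, Finset.sum_pair (Ne.symm hpj), hgj, hgp]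
    rw [hfsym j p]
    ring
  have hoffdiag : ∀ j k, j ≠ k → (∑ i, L (b i) (b j) (b k) (b i)) = 0 := by
    intro j k hjk
    refine Finset.sum_eq_zero fun i _ => ?_
    by_cases hik : μ i = μ k
    · by_cases hij : μ i = μ j
      · obtain ⟨p, hpk, hμpk, hS⟩ := hpartner k
        have hjk2 : μ j = μ k := by rw [← hij, hik]
        have hjmem : j ∈ Finset.univ.filter (fun i => μ i = μ k) := by
          simp [hjk2]
        have himem : i ∈ Finset.univ.filter (fun i => μ i = μ k) := by
          simp [hik]
        rw [hS] at hjmem himem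
        simp only [Finset.mem_insert, Finset.mem_singleton] at hjmem himem
        have hjp : j = p := hjmem.resolve_left hjk
        rcases himem with h | h
        · rw [h]; exact hz34 (b k) (b j) (b k)
        · rw [h, ← hjp]; exact hz12 (b j) (b k) (b j)
      · exact mix12 i j (b k) (b i) hij
    · exact mix34 (b i) (b j) k i fun e => hik e.symm
  have e1 : ricci L y z = ∑ i, L (b i) y z (b i) := by
    have h := sum_L_eq_sum_L (stdOrthonormalBasis ℝ V) b L LinearMap.id y z
    simp only [LinearMap.id_coe, id_eq] at h
    simpa [ricci] using h
  have e3 : scalarCurv L = ∑ l, g l := by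
    have h := trace_L_eq_trace_L (stdOrthonormalBasis ℝ V) b L LinearMap.id
    simp only [LinearMap.id_coe, id_eq] at h
    simpa [scalarCurv, ricci, hgdef, hfdef] using h
  have e4 : scalarCurvStar P L = ∑ l, μ l * g l := by
    have h := trace_L_eq_trace_L (stdOrthonormalBasis ℝ V) b L P
    have h2 : scalarCurvStar P L = ∑ l, ∑ i, L (b i) (b l) (b l) (P (b i)) := by
      simpa [scalarCurvStar, ricciStar] using h
    rw [h2]
    refine Finset.sum_congr rfl fun l _ => ?_
    have hterm : ∀ i, L (b i) (b l) (b l) (P (b i)) = μ i * f i l := fun i => by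
      rw [hb i]
      simp [hfdef]
    rw [Finset.sum_congr rfl fun i _ => hterm i, hgdef]
    simp only []
    rw [Finset.mul_sum]
    refine Finset.sum_congr rfl fun i _ => ?_
    by_cases h : μ i = μ l
    · rw [h]
    · rw [hfmix i l h]; ring
  have hmain : ∑ i, L (b i) y z (b i) = ∑ j, ⟪b j, y⟫ * ⟪b j, z⟫ * g j := by
    calc ∑ i, L (b i) y z (b i)
        = ∑ i, ∑ j, ⟪b j, y⟫ * L (b i) (b j) z (b i) :=
          Finset.sum_congr rfl fun i _ => expand_slot2 b L (b i) z (b i) y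
      _ = ∑ i, ∑ j, ⟪b j, y⟫ * ∑ k, ⟪b k, z⟫ * L (b i) (b j) (b k) (b i) := by
          refine Finset.sum_congr rfl fun i _ => Finset.sum_congr rfl fun j _ => ?_
          rw [← expand_slot3 b L (b i) (b j) (b i) z]
      _ = ∑ j, ∑ i, ⟪b j, y⟫ * ∑ k, ⟪b k, z⟫ * L (b i) (b j) (b k) (b i) :=
          Finset.sum_comm
      _ = ∑ j, ∑ k, ⟪b j, y⟫ * ⟪b k, z⟫ * ∑ i, L (b i) (b j) (b k) (b i) := by
          refine Finset.sum_congr rfl fun j _ => ?_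
          rw [← Finset.mul_sum, Finset.sum_comm, Finset.mul_sum]
          refine Finset.sum_congr rfl fun k _ => ?_
          rw [← Finset.mul_sum]
          ring
      _ = ∑ j, ⟪b j, y⟫ * ⟪b j, z⟫ * ∑ i, L (b i) (b j) (b j) (b i) := by
          refine Finset.sum_congr rfl fun j _ => ?_
          refine Finset.sum_eq_single j (fun k _ hkj => ?_) (fun h => absurd (Finset.mem_univ j) h)
          rw [hoffdiag j k fun e => hkj e.symm, mul_zero]
      _ = ∑ j, ⟪b j, y⟫ * ⟪b j, z⟫ * g j := by
          refine Finset.sum_congr rfl fun j _ => ?_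
          rw [hgdef]
  have hin1 : ⟪y, z⟫ = ∑ j, ⟪b j, y⟫ * ⟪b j, z⟫ := by
    rw [← b.sum_inner_mul_inner y z]
    exact Finset.sum_congr rfl fun j _ => by rw [real_inner_comm y (b j)]
  have hin2 : ⟪y, P z⟫ = ∑ j, ⟪b j, y⟫ * (μ j * ⟪b j, z⟫) := by
    rw [← b.sum_inner_mul_inner y (P z)]
    refine Finset.sum_congr rfl fun j _ => ?_
    rw [real_inner_comm y (b j)]
    congr 1
    rw [← hsymP (b j) z, hb j, real_inner_smul_left]
  rw [e1, hmain, e3, e4, hin1, hin2]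
  rw [show ∑ j, ⟪b j, y⟫ * ⟪b j, z⟫ * g j
      = ∑ j, ⟪b j, y⟫ * ⟪b j, z⟫ *
          ((1/4 : ℝ) * ((∑ l, g l) + μ j * (∑ l, μ l * g l))) from
    Finset.sum_congr rfl fun j _ => by rw [← hdiag j]]
  rw [Finset.mul_sum, Finset.mul_sum, ← Finset.sum_add_distrib, Finset.mul_sum]
  exact Finset.sum_congr rfl fun j _ => by ring
end

section
/- Let (V, P, g) be 4-dimensional with tr P = 0, and let L be a Riemannian P-tensor on V. If x, y ∈ V are orthonormal vectors spanning a totally real 2-plane, i.e. g(x, Px) = g(x, Py) = g(y, Px) = g(y, Py) = 0, then the sectional curvature of this 2-plane with respect to L equals L(x, y, x, y) = −τ(L)/8. In particular all totally real 2-planes have the same sectional curvature with respect to L. -/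
open scoped RealInnerProductSpace
open Module

variable {V : Type*} [NormedAddCommGroup V] [InnerProductSpace ℝ V]
  [FiniteDimensional ℝ V]

set_option maxHeartbeats 1000000
set_option linter.unusedSectionVars false
set_option linter.unusedVariables false

lemma sum_onb_eq {ι κ : Type*} [Fintype ι] [Fintype κ]
    (B : V →ₗ[ℝ] V →ₗ[ℝ] ℝ) (e : OrthonormalBasis ι ℝ V) (f : OrthonormalBasis κ ℝ V) :
    ∑ i, B (e i) (e i) = ∑ j, B (f j) (f j) := by
  classical
  have expand : ∀ i, B (e i) (e i)
      = ∑ j, ∑ k, ⟪f j, e i⟫ * (⟪f k, e i⟫ * B (f j) (f k)) := by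
    intro i
    conv_lhs => rw [← f.sum_repr' (e i)]
    simp only [map_sum, LinearMap.sum_apply, map_smul, LinearMap.smul_apply, smul_eq_mul,
      Finset.mul_sum]
    rw [Finset.sum_comm]
    exact Finset.sum_congr rfl fun j _ => Finset.sum_congr rfl fun k _ => by ring
  calc ∑ i, B (e i) (e i)
      = ∑ i, ∑ j, ∑ k, ⟪f j, e i⟫ * (⟪f k, e i⟫ * B (f j) (f k)) :=
        Finset.sum_congr rfl fun i _ => expand i
    _ = ∑ j, ∑ k, (∑ i, ⟪f j, e i⟫ * ⟪e i, f k⟫) * B (f j) (f k) := by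
        rw [Finset.sum_comm]
        refine Finset.sum_congr rfl fun j _ => ?_
        rw [Finset.sum_comm]
        refine Finset.sum_congr rfl fun k _ => ?_
        rw [Finset.sum_mul]
        refine Finset.sum_congr rfl fun i _ => ?_
        rw [real_inner_comm (e i) (f k)]; ring
    _ = ∑ j, ∑ k, ⟪f j, f k⟫ * B (f j) (f k) := by
        refine Finset.sum_congr rfl fun j _ => Finset.sum_congr rfl fun k _ => ?_
        rw [e.sum_inner_mul_inner]
    _ = ∑ j, B (f j) (f j) := by
        have ho := orthonormal_iff_ite.mp f.orthonormal
        refine Finset.sum_congr rfl fun j _ => ?_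
        simp [ho, Finset.sum_ite_eq]

noncomputable def contr14 (L : V →ₗ[ℝ] V →ₗ[ℝ] V →ₗ[ℝ] V →ₗ[ℝ] ℝ) (y z : V) :
    V →ₗ[ℝ] V →ₗ[ℝ] ℝ :=
  LinearMap.mk₂ ℝ (fun u w => L u y z w)
    (fun m n p => by simp) (fun c m n => by simp) (fun m n p => by simp)
    (fun c m n => by simp)

noncomputable def contr23 (L : V →ₗ[ℝ] V →ₗ[ℝ] V →ₗ[ℝ] V →ₗ[ℝ] ℝ) (u w : V) :
    V →ₗ[ℝ] V →ₗ[ℝ] ℝ :=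
  LinearMap.mk₂ ℝ (fun a b => L u a b w)
    (fun m n p => by simp) (fun c m n => by simp) (fun m n p => by simp)
    (fun c m n => by simp)


/-- Let (V, P, g) be 4-dimensional with tr P = 0, and let L be a
Riemannian P-tensor on V. If x, y ∈ V are orthonormal vectors spanning a
totally real 2-plane, i.e. g(x,Px) = g(x,Py) = g(y,Px) = g(y,Py) = 0, then the
sectional curvature of this 2-plane with respect to L equals
L(x,y,x,y) = −τ(L)/8. In particular all totally real 2-planes have the same
sectional curvature with respect to L. -/
theorem riemannian_P_tensor_totally_real_sectional_curvature
    (hdim : finrank ℝ V = 4)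
    (P : V →ₗ[ℝ] V)
    (hP2 : ∀ x : V, P (P x) = x)
    (hPg : ∀ x y : V, ⟪P x, P y⟫ = ⟪x, y⟫)
    (htr : LinearMap.trace ℝ V P = 0)
    (L : V →ₗ[ℝ] V →ₗ[ℝ] V →ₗ[ℝ] V →ₗ[ℝ] ℝ)
    (hA1 : ∀ x y z w : V, L x y z w = - L y x z w)
    (hA2 : ∀ x y z w : V, L x y z w = - L x y w z)
    (hBianchi : ∀ x y z w : V, L x y z w + L y z x w + L z x y w = 0)
    (hRP : ∀ x y z w : V, L x y (P z) (P w) = L x y z w) :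
    ∀ x y : V, ⟪x, x⟫ = 1 → ⟪y, y⟫ = 1 → ⟪x, y⟫ = 0 →
      ⟪x, P x⟫ = 0 → ⟪x, P y⟫ = 0 → ⟪y, P x⟫ = 0 → ⟪y, P y⟫ = 0 →
      L x y x y = - scalarCurv L / 8 := by
  -- pair symmetry L(x,y,z,w) = L(z,w,x,y)
  have pairSym : ∀ x y z w : V, L x y z w = L z w x y := by
    intro x y z w
    have B1 := hBianchi y z x w
    have B2 := hBianchi z x w y
    have B3 := hBianchi x w y z
    have B4 := hBianchi w y z x
    linarith [hA2 z x y w, hA2 x w y z, hA1 w z x y, hA2 w y z x,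
      hA1 y x w z, hA2 x y z w, hA2 y z x w, hA2 z w x y]
  have firstP : ∀ u v z w : V, L (P u) (P v) z w = L u v z w := by
    intro u v z w
    calc L (P u) (P v) z w = L z w (P u) (P v) := pairSym _ _ _ _
      _ = L z w u v := hRP _ _ _ _
      _ = L u v z w := (pairSym u v z w).symm
  intro x y hx hy hxy hxPx hxPy hyPx hyPy
  -- the orthonormal basis x, y, Px, Py
  set v : Fin 4 → V := ![x, y, P x, P y] with hv
  have hyx : ⟪y, x⟫ = 0 := by rw [real_inner_comm]; exact hxy
  have hPxx : ⟪P x, x⟫ = 0 := by rw [real_inner_comm]; exact hxPx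
  have hPxy : ⟪P x, y⟫ = 0 := by rw [real_inner_comm]; exact hyPx
  have hPyx : ⟪P y, x⟫ = 0 := by rw [real_inner_comm]; exact hxPy
  have hPyy : ⟪P y, y⟫ = 0 := by rw [real_inner_comm]; exact hyPy
  have hnx : ‖x‖ = 1 := by rw [norm_eq_sqrt_real_inner, hx, Real.sqrt_one]
  have hny : ‖y‖ = 1 := by rw [norm_eq_sqrt_real_inner, hy, Real.sqrt_one]
  have hnPx : ‖P x‖ = 1 := by rw [norm_eq_sqrt_real_inner, hPg, hx, Real.sqrt_one]
  have hnPy : ‖P y‖ = 1 := by rw [norm_eq_sqrt_real_inner, hPg, hy, Real.sqrt_one]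
  have hon : Orthonormal ℝ v := by
    rw [orthonormal_iff_ite]
    intro i j
    fin_cases i <;> fin_cases j <;>
      simp [hv, hPg, hx, hy, hxy, hyx, hxPx, hxPy, hyPx, hyPy, hPxx, hPxy, hPyx, hPyy,
          hnx, hny, hnPx, hnPy]
  have hcard : Fintype.card (Fin 4) = finrank ℝ V := by simp [hdim]
  let b : Basis (Fin 4) ℝ V := basisOfOrthonormalOfCardEqFinrank hon hcard
  have hb : ⇑b = v := coe_basisOfOrthonormalOfCardEqFinrank hon hcard
  let f : OrthonormalBasis (Fin 4) ℝ V := b.toOrthonormalBasis (by rwa [hb])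
  have hf : ∀ i, f i = v i := by
    intro i
    have : ⇑f = ⇑b := b.coe_toOrthonormalBasis _
    rw [this, hb]
  -- ricci in the new basis
  have hric : ∀ y' z' : V, ricci L y' z' = ∑ k, L (v k) y' z' (v k) := by
    intro y' z'
    have h := sum_onb_eq (contr14 L y' z') (stdOrthonormalBasis ℝ V) f
    simp only [contr14, LinearMap.mk₂_apply, hf] at h
    simpa [ricci] using h
  have htau : scalarCurv L = ∑ k, ∑ l, L (v k) (v l) (v l) (v k) := by
    have h1 : scalarCurv L
        = ∑ j, ∑ k, L (v k) (stdOrthonormalBasis ℝ V j) (stdOrthonormalBasis ℝ V j) (v k) := by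
      unfold scalarCurv
      exact Finset.sum_congr rfl fun j _ => hric _ _
    rw [h1, Finset.sum_comm]
    refine Finset.sum_congr rfl fun k _ => ?_
    have h := sum_onb_eq (contr23 L (v k) (v k)) (stdOrthonormalBasis ℝ V) f
    simp only [contr23, LinearMap.mk₂_apply, hf] at h
    exact h
  -- curvature identities
  have diag : ∀ u z w : V, L u u z w = 0 := by
    intro u z w; have := hA1 u u z w; linarith
  have diag2 : ∀ z w u : V, L z w u u = 0 := by
    intro z w u; have := hA2 z w u u; linarith
  have e12 : L x y y x = - L x y x y := by have := hA2 x y y x; linarith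
  have e21 : L y x x y = - L x y x y := by have := hA1 y x x y; linarith
  have e13 : L x (P x) (P x) x = 0 := by
    have h := hRP x (P x) x (P x)
    rw [hP2] at h
    have h2 := hA2 x (P x) (P x) x
    linarith
  have e31 : L (P x) x x (P x) = 0 := by
    have h1 := hA1 (P x) x x (P x)
    have h2 := hA2 x (P x) x (P x)
    linarith [e13]
  have e24 : L y (P y) (P y) y = 0 := by
    have h := hRP y (P y) y (P y)
    rw [hP2] at h
    have h2 := hA2 y (P y) (P y) y
    linarith
  have e42 : L (P y) y y (P y) = 0 := by
    have h1 := hA1 (P y) y y (P y)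
    have h2 := hA2 y (P y) y (P y)
    linarith [e24]
  have key1 : L y (P x) y (P x) = L x y x y := by
    have b1 := hBianchi x y (P y) (P x)
    have t1 : L x y (P y) (P x) = L x y y x := hRP x y y x
    have t2 : L y (P y) x (P x) = 0 := by
      have h := hRP y (P y) (P x) x
      rw [hP2] at h
      have h2 := hA2 y (P y) (P x) x
      linarith
    have t3 : L (P y) x y (P x) = L y (P x) y (P x) := by
      have h := firstP y (P x) y (P x)
      rw [hP2] at h
      exact h
    linarith [e12]
  have key2 : L x (P y) x (P y) = L x y x y := by
    have b1 := hBianchi y x (P x) (P y)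
    have t1 : L y x (P x) (P y) = L y x x y := hRP y x x y
    have t2 : L x (P x) y (P y) = 0 := by
      have h := hRP x (P x) (P y) y
      rw [hP2] at h
      have h2 := hA2 x (P x) (P y) y
      linarith
    have t3 : L (P x) y x (P y) = L x (P y) x (P y) := by
      have h := firstP x (P y) x (P y)
      rw [hP2] at h
      exact h
    linarith [e21]
  have e23 : L y (P x) (P x) y = - L x y x y := by
    have := hA2 y (P x) (P x) y; linarith [key1]
  have e32 : L (P x) y y (P x) = - L x y x y := by
    have h1 := hA1 (P x) y y (P x)
    have h2 := hA2 y (P x) y (P x)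
    linarith [key1]
  have e14 : L x (P y) (P y) x = - L x y x y := by
    have := hA2 x (P y) (P y) x; linarith [key2]
  have e41 : L (P y) x x (P y) = - L x y x y := by
    have h1 := hA1 (P y) x x (P y)
    have h2 := hA2 x (P y) x (P y)
    linarith [key2]
  have e34 : L (P x) (P y) (P y) (P x) = - L x y x y := by
    have h := firstP x y (P y) (P x)
    have h2 : L x y (P y) (P x) = L x y y x := hRP x y y x
    linarith [e12]
  have e43 : L (P y) (P x) (P x) (P y) = - L x y x y := by
    have h1 := hA1 (P y) (P x) (P x) (P y)
    have h2 := hA2 (P x) (P y) (P x) (P y)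
    have h3 := hA2 (P x) (P y) (P y) (P x)
    linarith [e34]
  have hsum : scalarCurv L = -8 * L x y x y := by
    rw [htau]
    simp only [Fin.sum_univ_four, hv, Matrix.cons_val_zero, Matrix.cons_val_one,
      Matrix.head_cons, Matrix.cons_val_two, Matrix.tail_cons, Matrix.cons_val_three,
      Matrix.head_fin_const]
    rw [diag x, diag y, diag (P x), diag (P y)]
    linarith [e12, e21, e13, e31, e24, e42, e23, e32, e14, e41, e34, e43]
  rw [hsum]; ring
end
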